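/- Let K be a number field, q a nonzero prime ideal of O_K, H the ray class group modulo q, and χ a character of H induced by a character χ* of the class group (i.e., of the ray class group modulo O_K). Then for x ≥ 2, the difference of the partial Euler sums satisfies |Φ_{χ*}(x) − Φ_χ(x)| ≤ (x/(x−1)) · (log N(q))/(N(q) − 1), where Φ_χ(x) = (1/(x−1)) ∫_1^x (∑_{N(a) ≤ t, (a,q)=1} Λ(a) χ([a])/N(a)) dt and Φ_{χ*}(x) is defined with the sum over all a with N(a) ≤ t. -/

import Mathlib

open NumberField MeasureTheory

private lemma aux_finite {K : Type*} [Field K] [NumberField K] (t : ℝ) :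
    {a : Ideal (𝓞 K) | a ≠ ⊥ ∧ (Ideal.absNorm a : ℝ) ≤ t}.Finite := by
  refine (Ideal.finite_setOf_absNorm_le ⌊t⌋₊).subset ?_
  rintro a ⟨-, h⟩
  exact Nat.le_floor h

private lemma aux_integrable {K : Type*} [Field K] [NumberField K]
    (w : Ideal (𝓞 K) → ℂ) (s : ℝ → Set (Ideal (𝓞 K))) (x : ℝ) (hx : 1 ≤ x)
    (hs : ∀ t a, a ∈ s t → a ≠ ⊥ ∧ (Ideal.absNorm a : ℝ) ≤ t)
    (hmem : ∀ t u a, a ∈ s u → (Ideal.absNorm a : ℝ) ≤ t → a ∈ s t) :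
    IntervalIntegrable (fun t => ∑' a : Ideal (𝓞 K), (s t).indicator w a) volume 1 x := by
  classical
  have hfin : (s x).Finite := (aux_finite x).subset (fun a ha => hs x a ha)
  set F := hfin.toFinset with hF
  have key : ∀ t ∈ Set.uIoc (1:ℝ) x, (∑' a : Ideal (𝓞 K), (s t).indicator w a)
      = ∑ a ∈ F, (Set.Ici ((Ideal.absNorm a : ℝ))).indicator (fun _ => w a) t := by
    intro t ht
    rw [Set.uIoc_of_le hx] at ht
    have htx : t ≤ x := ht.2
    rw [tsum_eq_sum (s := F) ?_]
    · refine Finset.sum_congr rfl fun a ha => ?_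
      by_cases hat : a ∈ s t
      · rw [Set.indicator_of_mem hat, Set.indicator_of_mem]
        exact (hs t a hat).2
      · rw [Set.indicator_of_notMem hat, Set.indicator_of_notMem]
        intro hIci
        exact hat (hmem t x a (hfin.mem_toFinset.mp ha) hIci)
    · intro a haF
      apply Set.indicator_of_notMem
      intro hat
      exact haF (hfin.mem_toFinset.mpr (hmem x t a hat (le_trans (hs t a hat).2 htx)))
  have hvol : volume (Set.uIoc (1:ℝ) x) < ⊤ := by
    rw [Set.uIoc]; exact measure_Ioc_lt_top
  have hstep : ∀ a ∈ F, IntervalIntegrable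
      (fun t => (Set.Ici ((Ideal.absNorm a : ℝ))).indicator (fun _ => w a) t) volume 1 x := by
    intro a _
    rw [intervalIntegrable_iff]
    exact (MeasureTheory.integrableOn_const hvol.ne).indicator measurableSet_Ici
  have hsum : IntervalIntegrable
      (∑ a ∈ F, fun t => (Set.Ici ((Ideal.absNorm a : ℝ))).indicator (fun _ => w a) t)
      volume 1 x := IntervalIntegrable.sum F hstep
  rw [intervalIntegrable_iff] at hsum ⊢
  refine hsum.congr_fun ?_ measurableSet_uIoc
  intro t ht
  simp only [Finset.sum_apply]
  exact (key t ht).symm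

/-- Let q be a nonzero prime ideal of a number field K, χ a ray class character
    mod q induced by a character χ* of the class group (so χ(a) = χ*(a) for a
    coprime to q, and |χ*| ≤ 1). Then for x ≥ 2,
    |Φ_{χ*}(x) - Φ_χ(x)| ≤ (x/(x-1))·log N(q)/(N(q)-1), where
    Φ_χ(x) = (1/(x-1))∫_1^x ∑_{N(a)≤t,(a,q)=1} Λ(a)χ(a)/N(a) dt and
    Φ_{χ*}(x) = (1/(x-1))∫_1^x ∑_{N(a)≤t} Λ(a)χ*(a)/N(a) dt. -/
theorem phi_diff_bound (K : Type*) [Field K] [NumberField K]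
    (q : Ideal (𝓞 K)) (hq : q.IsPrime) (hq0 : q ≠ ⊥)
    (Λ : Ideal (𝓞 K) → ℝ)
    (hΛ₁ : ∀ (P : Ideal (𝓞 K)) (k : ℕ), P.IsPrime → P ≠ ⊥ → 0 < k →
      Λ (P ^ k) = Real.log (Ideal.absNorm P))
    (hΛ₂ : ∀ a : Ideal (𝓞 K),
      (¬ ∃ (P : Ideal (𝓞 K)) (k : ℕ), P.IsPrime ∧ P ≠ ⊥ ∧ 0 < k ∧ a = P ^ k) → Λ a = 0)
    (χ χstar : Ideal (𝓞 K) → ℂ)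
    (hind : ∀ a : Ideal (𝓞 K), IsCoprime a q → χ a = χstar a)
    (hbd : ∀ a : Ideal (𝓞 K), ‖χstar a‖ ≤ 1)
    (Φχ Φχstar : ℝ → ℂ)
    (hΦχ : ∀ x : ℝ, Φχ x = (1 / (x - 1)) *
      ∫ t in (1:ℝ)..x,
        ∑' a : {a : Ideal (𝓞 K) // a ≠ ⊥ ∧ (Ideal.absNorm a : ℝ) ≤ t ∧ IsCoprime a q},
          (Λ a : ℂ) * χ a / (Ideal.absNorm (a : Ideal (𝓞 K)) : ℂ))
    (hΦχstar : ∀ x : ℝ, Φχstar x = (1 / (x - 1)) *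
      ∫ t in (1:ℝ)..x,
        ∑' a : {a : Ideal (𝓞 K) // a ≠ ⊥ ∧ (Ideal.absNorm a : ℝ) ≤ t},
          (Λ a : ℂ) * χstar a / (Ideal.absNorm (a : Ideal (𝓞 K)) : ℂ))
    (x : ℝ) (hx : 2 ≤ x) :
    ‖Φχstar x - Φχ x‖ ≤
      (x / (x - 1)) * (Real.log (Ideal.absNorm q) / ((Ideal.absNorm q : ℝ) - 1)) := by
  classical
  -- basic numerics
  have h0 : Ideal.absNorm q ≠ 0 := by
    rw [Ne, Ideal.absNorm_eq_zero_iff]; exact hq0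
  have h1 : Ideal.absNorm q ≠ 1 := by
    rw [Ne, Ideal.absNorm_eq_one_iff]; exact hq.ne_top
  have h2 : 2 ≤ Ideal.absNorm q := by omega
  have hnq1 : (1:ℝ) < (Ideal.absNorm q : ℝ) := by
    exact_mod_cast lt_of_lt_of_le one_lt_two h2
  have hnq0 : (0:ℝ) < (Ideal.absNorm q : ℝ) := lt_trans one_pos hnq1
  have hlog : 0 ≤ Real.log (Ideal.absNorm q) := Real.log_nonneg hnq1.le
  set C : ℝ := Real.log (Ideal.absNorm q) / ((Ideal.absNorm q : ℝ) - 1) with hC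
  have hC0 : 0 ≤ C := div_nonneg hlog (by linarith)
  set fstar : Ideal (𝓞 K) → ℂ :=
    fun a => (Λ a : ℂ) * χstar a / (Ideal.absNorm a : ℂ) with hfstar
  set fχ : Ideal (𝓞 K) → ℂ :=
    fun a => (Λ a : ℂ) * χ a / (Ideal.absNorm a : ℂ) with hfχ
  set sAll : ℝ → Set (Ideal (𝓞 K)) :=
    fun t => {a | a ≠ ⊥ ∧ (Ideal.absNorm a : ℝ) ≤ t} with hsAll
  set sCop : ℝ → Set (Ideal (𝓞 K)) :=
    fun t => {a | a ≠ ⊥ ∧ (Ideal.absNorm a : ℝ) ≤ t ∧ IsCoprime a q} with hsCop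
  have hfinAll : ∀ t, (sAll t).Finite := fun t => aux_finite t
  have hsub : ∀ t, sCop t ⊆ sAll t := by
    rintro t a ⟨ha1, ha2, -⟩; exact ⟨ha1, ha2⟩
  -- the core bound
  have hDbound : ∀ t : ℝ,
      ‖∑' a : Ideal (𝓞 K), (sAll t \ sCop t).indicator fstar a‖ ≤ C := by
    intro t
    set D := sAll t \ sCop t with hD
    set r : ℝ := ((Ideal.absNorm q : ℝ))⁻¹ with hr
    have hr0 : 0 ≤ r := inv_nonneg.mpr hnq0.le
    have hr1 : r < 1 := by
      rw [hr, inv_lt_one_iff₀]; right; exact hnq1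
    have hmono : ∀ k j : ℕ, q ^ (k+1) = q ^ (j+1) → k = j := by
      intro k j h
      have h' := congrArg Ideal.absNorm h
      rw [map_pow, map_pow] at h'
      have := Nat.pow_right_injective h2 h'
      omega
    have hsupp : ∀ a : Ideal (𝓞 K), D.indicator fstar a ≠ 0 → ∃ k : ℕ, a = q ^ (k+1) := by
      intro a ha
      have haD : a ∈ D := by
        by_contra h; exact ha (Set.indicator_of_notMem h _)
      have hfa : fstar a ≠ 0 := by
        intro h; exact ha (by rw [Set.indicator_of_mem haD, h])
      have hΛa : Λ a ≠ 0 := by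
        intro h; apply hfa; rw [hfstar]; simp [h]
      have hex : ∃ P k, (P : Ideal (𝓞 K)).IsPrime ∧ P ≠ ⊥ ∧ 0 < k ∧ a = P ^ k := by
        by_contra hcon; exact hΛa (hΛ₂ a hcon)
      obtain ⟨P, k, hP, hP0, hk, hak⟩ := hex
      have hncop : ¬ IsCoprime a q := by
        rcases haD with ⟨⟨hb, hn⟩, hnot⟩
        intro hc; exact hnot ⟨hb, hn, hc⟩
      have hqmax : q.IsMaximal := hq.isMaximal hq0
      have hPmax : P.IsMaximal := hP.isMaximal hP0
      have hle : a ≤ q := by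
        by_contra hcon
        apply hncop
        rw [Ideal.isCoprime_iff_sup_eq]
        refine hqmax.out.2 _ (lt_of_le_of_ne le_sup_right ?_)
        intro h
        exact hcon (le_sup_left.trans h.ge)
      have hPle : P ≤ q := by
        have : P ^ k ≤ q := by rw [← hak]; exact hle
        exact Ideal.IsPrime.le_of_pow_le this
      have hPq : P = q := hPmax.eq_of_le hq.ne_top hPle
      refine ⟨k - 1, ?_⟩
      rw [hak, hPq]
      congr 1
      omega
    set g : ℕ → ℂ := fun k => D.indicator fstar (q ^ (k+1)) with hg
    have htsum : ∑' a : Ideal (𝓞 K), D.indicator fstar a = ∑' k : ℕ, g k := by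
      apply tsum_eq_tsum_of_ne_zero_bij (i := fun k => q ^ ((k : ℕ) + 1))
      · intro k j hkj
        exact Subtype.ext (hmono _ _ hkj)
      · intro a ha
        obtain ⟨k, hk⟩ := hsupp a ha
        refine ⟨⟨k, ?_⟩, hk.symm⟩
        show g k ≠ 0
        rw [hg]
        simpa [← hk] using ha
      · intro k; rfl
    rw [htsum]
    have hb : ∀ k : ℕ, ‖g k‖ ≤ (Real.log (Ideal.absNorm q) * r) * r ^ k := by
      intro k
      by_cases hk : q ^ (k+1) ∈ D
      · rw [hg]
        simp only
        rw [Set.indicator_of_mem hk]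
        have hΛv : Λ (q ^ (k+1)) = Real.log (Ideal.absNorm q) :=
          hΛ₁ q (k+1) hq hq0 k.succ_pos
        have hNv : ((Ideal.absNorm (q ^ (k+1)) : ℕ) : ℂ) = ((Ideal.absNorm q : ℂ)) ^ (k+1) := by
          rw [map_pow]; push_cast; ring
        rw [hfstar]
        simp only
        rw [hΛv, hNv, norm_div, norm_mul, norm_pow]
        rw [Complex.norm_real, Real.norm_eq_abs, abs_of_nonneg hlog, Complex.norm_natCast]
        have hχ : ‖χstar (q ^ (k+1))‖ ≤ 1 := hbd _
        have hpow : (0:ℝ) < (Ideal.absNorm q : ℝ) ^ (k+1) := by positivity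
        calc Real.log (Ideal.absNorm q) * ‖χstar (q ^ (k+1))‖ / (Ideal.absNorm q : ℝ) ^ (k+1)
            ≤ Real.log (Ideal.absNorm q) * 1 / (Ideal.absNorm q : ℝ) ^ (k+1) := by
              gcongr
          _ = (Real.log (Ideal.absNorm q) * r) * r ^ k := by
              rw [mul_one, hr, mul_assoc, ← pow_succ', inv_pow, div_eq_mul_inv]
      · rw [hg]
        simp only
        rw [Set.indicator_of_notMem hk, norm_zero]
        exact mul_nonneg (mul_nonneg hlog hr0) (pow_nonneg hr0 k)
    have hsumgeo : Summable (fun k : ℕ => (Real.log (Ideal.absNorm q) * r) * r ^ k) :=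
      (summable_geometric_of_lt_one hr0 hr1).mul_left _
    have hsumg : Summable (fun k => ‖g k‖) :=
      Summable.of_nonneg_of_le (fun _ => norm_nonneg _) hb hsumgeo
    calc ‖∑' k, g k‖ ≤ ∑' k, ‖g k‖ := norm_tsum_le_tsum_norm hsumg
      _ ≤ ∑' k, (Real.log (Ideal.absNorm q) * r) * r ^ k := Summable.tsum_le_tsum hb hsumg hsumgeo
      _ = (Real.log (Ideal.absNorm q) * r) * (1 - r)⁻¹ := by
          rw [tsum_mul_left, tsum_geometric_of_lt_one hr0 hr1]
      _ = C := by
          rw [hC, hr]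
          have hne : (Ideal.absNorm q : ℝ) - 1 ≠ 0 := by linarith
          have hne0 : (Ideal.absNorm q : ℝ) ≠ 0 := hnq0.ne'
          field_simp
  -- rewrite the subtype tsums as indicator tsums
  have e1 : ∀ t : ℝ,
      (∑' a : {a : Ideal (𝓞 K) // a ≠ ⊥ ∧ (Ideal.absNorm a : ℝ) ≤ t},
        (Λ a : ℂ) * χstar a / (Ideal.absNorm (a : Ideal (𝓞 K)) : ℂ))
      = ∑' a : Ideal (𝓞 K), (sAll t).indicator fstar a := by
    intro t
    exact tsum_subtype (sAll t) fstar
  have e2 : ∀ t : ℝ,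
      (∑' a : {a : Ideal (𝓞 K) // a ≠ ⊥ ∧ (Ideal.absNorm a : ℝ) ≤ t ∧ IsCoprime a q},
        (Λ a : ℂ) * χ a / (Ideal.absNorm (a : Ideal (𝓞 K)) : ℂ))
      = ∑' a : Ideal (𝓞 K), (sCop t).indicator fstar a := by
    intro t
    have hi : (sCop t).indicator fχ = (sCop t).indicator fstar := by
      refine Set.indicator_congr fun a ha => ?_
      simp only [hfχ, hfstar, hind a ha.2.2]
    rw [← hi]
    exact tsum_subtype (sCop t) fχ
  -- integrability
  have hIall : IntervalIntegrable (fun t => ∑' a : Ideal (𝓞 K), (sAll t).indicator fstar a)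
      volume 1 x := by
    refine aux_integrable fstar sAll x (by linarith) (fun t a ha => ha) ?_
    rintro t u a ⟨ha1, -⟩ hN
    exact ⟨ha1, hN⟩
  have hIcop : IntervalIntegrable (fun t => ∑' a : Ideal (𝓞 K), (sCop t).indicator fstar a)
      volume 1 x := by
    refine aux_integrable fstar sCop x (by linarith) (fun t a ha => ⟨ha.1, ha.2.1⟩) ?_
    rintro t u a ⟨ha1, -, ha3⟩ hN
    exact ⟨ha1, hN, ha3⟩
  have hptwise : ∀ t : ℝ,
      (∑' a : Ideal (𝓞 K), (sAll t).indicator fstar a)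
        - (∑' a : Ideal (𝓞 K), (sCop t).indicator fstar a)
      = ∑' a : Ideal (𝓞 K), (sAll t \ sCop t).indicator fstar a := by
    intro t
    have hA : Summable ((sAll t).indicator fstar) :=
      summable_of_ne_finset_zero (s := (hfinAll t).toFinset)
        (fun a ha => Set.indicator_of_notMem
          (fun h => ha ((hfinAll t).mem_toFinset.mpr h)) _)
    have hB : Summable ((sCop t).indicator fstar) :=
      summable_of_ne_finset_zero (s := (hfinAll t).toFinset)
        (fun a ha => Set.indicator_of_notMem
          (fun h => ha ((hfinAll t).mem_toFinset.mpr (hsub t h))) _)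
    rw [Set.indicator_sdiff (hsub t) fstar]
    simp only [Pi.sub_apply]
    exact (Summable.tsum_sub hA hB).symm
  -- assemble
  rw [hΦχstar x, hΦχ x]
  simp only [e1, e2]
  rw [← mul_sub, ← intervalIntegral.integral_sub hIall hIcop]
  simp only [hptwise]
  have hx1 : (0:ℝ) < x - 1 := by linarith
  have hint : ‖∫ t in (1:ℝ)..x, ∑' a : Ideal (𝓞 K), (sAll t \ sCop t).indicator fstar a‖
      ≤ C * |x - 1| :=
    intervalIntegral.norm_integral_le_of_norm_le_const (fun t _ => hDbound t)
  have hcoef : ‖(1 / ((x:ℂ) - 1))‖ = 1 / (x - 1) := by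
    have hc : ((x:ℂ) - 1) = ((x - 1 : ℝ) : ℂ) := by push_cast; ring
    rw [norm_div, norm_one, hc, Complex.norm_real, Real.norm_eq_abs, abs_of_pos hx1]
  rw [norm_mul, hcoef]
  calc (1 / (x - 1)) * ‖∫ t in (1:ℝ)..x, ∑' a : Ideal (𝓞 K), (sAll t \ sCop t).indicator fstar a‖
      ≤ (1 / (x - 1)) * (C * |x - 1|) := by
        exact mul_le_mul_of_nonneg_left hint (by positivity)
    _ = C := by
        rw [abs_of_pos hx1]
        field_simp
    _ ≤ (x / (x - 1)) * C :=
        le_mul_of_one_le_left hC0 ((one_le_div hx1).mpr (by linarith))
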